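/- Let C > 0, α > 0, Lx > 0, Ly > 0, d > 0 and N ≥ 1, and set yₙ = (2n − 1)·Ly/(2N) for n = 1, …, N. Then (1/(Lx·Ly)) ∫₀^{Lx} ∫₀^{Ly} log₂( C · e^{−α·min(x, Lx−x)} · ( Σ_{n=1}^N 1/√((y − yₙ)² + d²) )² ) dy dx ≤ log₂(C) − (α·Lx/4)·log₂(e) + 2·log₂( (1/Ly) Σ_{n=1}^N [ arsinh((Ly − yₙ)/d) + arsinh(yₙ/d) ] ), where arsinh(x) = ln(x + √(x² + 1)). -/

import Mathlib

open MeasureTheory Real Finset intervalIntegral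

lemma dfpas_cont_kernel (c d : ℝ) (hd : 0 < d) :
    Continuous fun y : ℝ => 1 / Real.sqrt ((y - c) ^ 2 + d ^ 2) := by
  apply Continuous.div continuous_const
  · exact Real.continuous_sqrt.comp (by continuity)
  · intro y
    have : 0 < (y - c) ^ 2 + d ^ 2 := by positivity
    exact ne_of_gt (Real.sqrt_pos.mpr this)

lemma dfpas_arsinh_integral (c d L : ℝ) (hd : 0 < d) :
    ∫ y in (0:ℝ)..L, 1 / Real.sqrt ((y - c) ^ 2 + d ^ 2)
      = Real.arsinh ((L - c) / d) + Real.arsinh (c / d) := by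
  have hderiv : ∀ y ∈ Set.uIcc (0:ℝ) L,
      HasDerivAt (fun y => Real.arsinh ((y - c) / d))
        (1 / Real.sqrt ((y - c) ^ 2 + d ^ 2)) y := by
    intro y _
    have h1 : HasDerivAt (fun y : ℝ => (y - c) / d) (1 / d) y := by
      simpa using ((hasDerivAt_id y).sub_const c).div_const d
    have h2 := (Real.hasDerivAt_arsinh ((y - c) / d)).comp y h1
    refine HasDerivAt.congr_deriv h2 ?_
    have hpos : 0 < (y - c) ^ 2 + d ^ 2 := by positivity
    have he : 1 + ((y - c) / d) ^ 2 = ((y - c) ^ 2 + d ^ 2) / d ^ 2 := by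
      field_simp
      ring
    rw [he, Real.sqrt_div (by positivity), Real.sqrt_sq hd.le]
    have hs : 0 < Real.sqrt ((y - c) ^ 2 + d ^ 2) := Real.sqrt_pos.mpr hpos
    field_simp
  rw [intervalIntegral.integral_eq_sub_of_hasDerivAt hderiv
    ((dfpas_cont_kernel c d hd).intervalIntegrable 0 L)]
  rw [show ((0:ℝ) - c) / d = -(c / d) by ring, Real.arsinh_neg]
  ring

lemma dfpas_min_cont (Lx : ℝ) : Continuous fun x : ℝ => min x (Lx - x) :=
  continuous_id.min (continuous_const.sub continuous_id)

lemma dfpas_min_integral (Lx : ℝ) (hLx : 0 < Lx) :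
    ∫ x in (0:ℝ)..Lx, min x (Lx - x) = Lx ^ 2 / 4 := by
  have hint : ∀ a b : ℝ, IntervalIntegrable (fun x => min x (Lx - x)) volume a b :=
    fun a b => (dfpas_min_cont Lx).intervalIntegrable a b
  have h1 : ∫ x in (0:ℝ)..(Lx/2), min x (Lx - x) = ∫ x in (0:ℝ)..(Lx/2), x := by
    apply intervalIntegral.integral_congr
    intro x hx
    rw [Set.uIcc_of_le (by linarith)] at hx
    exact min_eq_left (by cases hx; linarith)
  have h2 : ∫ x in (Lx/2)..Lx, min x (Lx - x) = ∫ x in (Lx/2)..Lx, (Lx - x) := by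
    apply intervalIntegral.integral_congr
    intro x hx
    rw [Set.uIcc_of_le (by linarith)] at hx
    exact min_eq_right (by cases hx; linarith)
  have hsplit := intervalIntegral.integral_add_adjacent_intervals
    (hint 0 (Lx/2)) (hint (Lx/2) Lx)
  rw [← hsplit, h1, h2, integral_id,
    intervalIntegral.integral_sub (intervalIntegrable_const) (intervalIntegral.intervalIntegrable_id),
    integral_id, intervalIntegral.integral_const]
  simp only [smul_eq_mul]
  ring

theorem df_pas_multi_waveguide_ergodic_rate_bound
    (C α Lx Ly d : ℝ) (hC : 0 < C) (hα : 0 < α) (hLx : 0 < Lx) (hLy : 0 < Ly)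
    (hd : 0 < d) (N : ℕ) (hN : 1 ≤ N)
    (Y : ℕ → ℝ) (hY : ∀ n, Y n = (2 * (n : ℝ) - 1) * Ly / (2 * N)) :
    (1 / (Lx * Ly)) *
      ∫ x in (0:ℝ)..Lx, ∫ y in (0:ℝ)..Ly,
        Real.logb 2 (C * Real.exp (-α * min x (Lx - x)) *
          (∑ n ∈ Finset.Icc 1 N, 1 / Real.sqrt ((y - Y n) ^ 2 + d ^ 2)) ^ 2)
    ≤ Real.logb 2 C - (α * Lx / 4) * Real.logb 2 (Real.exp 1)
      + 2 * Real.logb 2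
          ((1 / Ly) * ∑ n ∈ Finset.Icc 1 N,
            (Real.arsinh ((Ly - Y n) / d) + Real.arsinh (Y n / d))) := by
  set S : ℝ → ℝ := fun y => ∑ n ∈ Finset.Icc 1 N, 1 / Real.sqrt ((y - Y n) ^ 2 + d ^ 2)
    with hSdef
  have hScont : Continuous S :=
    continuous_finset_sum _ fun n _ => dfpas_cont_kernel (Y n) d hd
  have hSpos : ∀ y, 0 < S y := fun y =>
    Finset.sum_pos (fun n _ => by positivity) (Finset.nonempty_Icc.mpr hN)
  set A : ℝ := ∑ n ∈ Finset.Icc 1 N,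
      (Real.arsinh ((Ly - Y n) / d) + Real.arsinh (Y n / d)) with hAdef
  have hA : ∫ y in (0:ℝ)..Ly, S y = A := by
    simp only [hSdef]
    rw [intervalIntegral.integral_finset_sum
      (fun n _ => (dfpas_cont_kernel (Y n) d hd).intervalIntegrable 0 Ly)]
    exact Finset.sum_congr rfl fun n _ => dfpas_arsinh_integral (Y n) d Ly hd
  have hApos : 0 < A := by
    rw [← hA]
    exact intervalIntegral_pos_of_pos (hScont.intervalIntegrable 0 Ly) hSpos hLy
  set a : ℝ := (1 / Ly) * A with hadef
  have hapos : 0 < a := by positivity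
  have hlog2 : 0 < Real.log 2 := Real.log_pos one_lt_two
  have hlogcont : Continuous fun y => Real.log (S y) := hScont.log fun y => (hSpos y).ne'
  set J : ℝ := ∫ y in (0:ℝ)..Ly, Real.log (S y) with hJdef
  -- Jensen via tangent line
  have hJ : J ≤ Ly * Real.log a := by
    have hbound : ∀ y ∈ Set.Icc (0:ℝ) Ly,
        Real.log (S y) ≤ (Real.log a - 1) + S y / a := by
      intro y _
      have h1 : Real.log (S y / a) ≤ S y / a - 1 :=
        Real.log_le_sub_one_of_pos (by positivity)
      have h2 : Real.log (S y / a) = Real.log (S y) - Real.log a :=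
        Real.log_div (hSpos y).ne' hapos.ne'
      linarith
    have hgint : IntervalIntegrable (fun y => (Real.log a - 1) + S y / a)
        MeasureTheory.volume 0 Ly :=
      (continuous_const.add (hScont.div_const a)).intervalIntegrable 0 Ly
    have hcint : IntervalIntegrable (fun _ : ℝ => Real.log a - 1)
        MeasureTheory.volume 0 Ly := intervalIntegrable_const
    have hmono := intervalIntegral.integral_mono_on hLy.le
      (hlogcont.intervalIntegrable 0 Ly) hgint hbound
    rw [intervalIntegral.integral_add hcint
      ((hScont.div_const a).intervalIntegrable 0 Ly),
      intervalIntegral.integral_const, intervalIntegral.integral_div, hA] at hmono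
    have hAa : A / a = Ly := by
      rw [hadef]; field_simp
    rw [hAa] at hmono
    simp only [smul_eq_mul, sub_zero] at hmono
    linarith
  -- pointwise expansion of logb
  have hlogbexp : ∀ t : ℝ, Real.logb 2 (Real.exp t) = t * Real.logb 2 (Real.exp 1) := by
    intro t
    simp only [Real.logb, Real.log_exp]
    ring
  have hpt : ∀ x y : ℝ,
      Real.logb 2 (C * Real.exp (-α * min x (Lx - x)) * (S y) ^ 2)
        = (Real.logb 2 C + (-α * min x (Lx - x)) * Real.logb 2 (Real.exp 1))
          + 2 * Real.logb 2 (S y) := by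
    intro x y
    rw [Real.logb_mul (by positivity) (by positivity),
      Real.logb_mul hC.ne' (Real.exp_pos _).ne', Real.logb_pow, hlogbexp]
    push_cast
    ring
  have hlbcont : Continuous fun y => Real.logb 2 (S y) := by
    simp only [Real.logb]
    exact hlogcont.div_const _
  have hlogb : ∫ y in (0:ℝ)..Ly, Real.logb 2 (S y) = J / Real.log 2 := by
    simp only [Real.logb]
    rw [intervalIntegral.integral_div]
  have hinner : ∀ x : ℝ,
      (∫ y in (0:ℝ)..Ly, Real.logb 2 (C * Real.exp (-α * min x (Lx - x)) * (S y) ^ 2))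
        = Ly * (Real.logb 2 C + (-α * min x (Lx - x)) * Real.logb 2 (Real.exp 1))
          + 2 * (J / Real.log 2) := by
    intro x
    rw [show (fun y => Real.logb 2 (C * Real.exp (-α * min x (Lx - x)) * (S y) ^ 2))
        = fun y => (Real.logb 2 C + (-α * min x (Lx - x)) * Real.logb 2 (Real.exp 1))
          + 2 * Real.logb 2 (S y) from funext (hpt x)]
    rw [intervalIntegral.integral_add (continuous_const.intervalIntegrable 0 Ly)
      (Continuous.intervalIntegrable (u := fun y => 2 * Real.logb 2 (S y)) (continuous_const.mul hlbcont) 0 Ly),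
      intervalIntegral.integral_const, intervalIntegral.integral_const_mul, hlogb]
    simp only [smul_eq_mul, sub_zero]
  have houter :
      (∫ x in (0:ℝ)..Lx, ∫ y in (0:ℝ)..Ly,
          Real.logb 2 (C * Real.exp (-α * min x (Lx - x)) * (S y) ^ 2))
        = Ly * (Lx * Real.logb 2 C
            - (α * Real.logb 2 (Real.exp 1)) * (Lx ^ 2 / 4))
          + Lx * (2 * (J / Real.log 2)) := by
    rw [show (fun x => ∫ y in (0:ℝ)..Ly,
        Real.logb 2 (C * Real.exp (-α * min x (Lx - x)) * (S y) ^ 2))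
        = fun x => (Ly * Real.logb 2 C + 2 * (J / Real.log 2))
          + (-(Ly * α * Real.logb 2 (Real.exp 1))) * min x (Lx - x) from
        funext fun x => by rw [hinner x]; ring]
    rw [intervalIntegral.integral_add (continuous_const.intervalIntegrable 0 Lx)
      (Continuous.intervalIntegrable (u := fun x => (-(Ly * α * Real.logb 2 (Real.exp 1))) * min x (Lx - x)) (continuous_const.mul (dfpas_min_cont Lx)) 0 Lx),
      intervalIntegral.integral_const, intervalIntegral.integral_const_mul,
      dfpas_min_integral Lx hLx]
    simp only [smul_eq_mul, sub_zero]
    ring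
  rw [houter]
  have key : (1 / (Lx * Ly)) *
      (Ly * (Lx * Real.logb 2 C - (α * Real.logb 2 (Real.exp 1)) * (Lx ^ 2 / 4))
        + Lx * (2 * (J / Real.log 2)))
      = Real.logb 2 C - (α * Lx / 4) * Real.logb 2 (Real.exp 1)
        + 2 * (J / Real.log 2) / Ly := by
    field_simp
  rw [key]
  have h5 : J / Ly ≤ Real.log a := by
    rw [div_le_iff₀ hLy]; linarith [hJ]
  have h6 : 2 * (J / Real.log 2) / Ly ≤ 2 * Real.logb 2 a :=
    calc 2 * (J / Real.log 2) / Ly = 2 * ((J / Ly) / Real.log 2) := by ring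
      _ ≤ 2 * (Real.log a / Real.log 2) := by gcongr
      _ = 2 * Real.logb 2 a := rfl
  linarith
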